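/- Let f : ℂ → ℂ be twice differentiable with f'' (x) = x · f(x) for all x (i.e., f solves the Airy equation). Then for any a ∈ ℂ and nonnegative integers m, n with n < m, the function g(x) = f^{(n)}(x + a) (the n-th derivative of f shifted by a) satisfies (L - a)^m g = 0, where L is the differential operator Lg = g'' - x·g. -/

import Mathlib

private lemma key_airy (f : ℂ → ℂ) (hf : ContDiff ℂ ⊤ f)
    (hairy : ∀ x, deriv (deriv f) x = x * f x) :
    ∀ n x, iteratedDeriv (n + 2) f x
      = x * iteratedDeriv n f x + (n : ℂ) * iteratedDeriv (n - 1) f x := by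
  intro n
  induction n with
  | zero =>
    intro x
    simp [iteratedDeriv_succ, iteratedDeriv_zero, hairy x]
  | succ k ih =>
    intro x
    have hdk : Differentiable ℂ (iteratedDeriv k f) :=
      hf.differentiable_iteratedDeriv k (by exact_mod_cast lt_top_iff_ne_top.2 (by simp))
    have h1 : iteratedDeriv (k + 2) f = fun y => y * iteratedDeriv k f y
        + (k : ℂ) * iteratedDeriv (k - 1) f y := funext ih
    have h2 : iteratedDeriv (k + 1 + 2) f = deriv (iteratedDeriv (k + 2) f) := by
      rw [← iteratedDeriv_succ]
    rw [h2, h1]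
    have hprod : ∀ y, HasDerivAt (fun y : ℂ => y * iteratedDeriv k f y)
        (iteratedDeriv k f y + y * deriv (iteratedDeriv k f) y) y := by
      intro y
      have := (hasDerivAt_id y).mul (hdk y).hasDerivAt
      simpa [mul_comm, Pi.mul_def] using this
    have hsplit : deriv (fun y => y * iteratedDeriv k f y
        + (k : ℂ) * iteratedDeriv (k - 1) f y) x
        = (iteratedDeriv k f x + x * deriv (iteratedDeriv k f) x)
          + (k : ℂ) * deriv (iteratedDeriv (k - 1) f) x := by
      rcases Nat.eq_zero_or_pos k with hk | hk
      · subst hk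
        simp only [Nat.cast_zero, zero_mul, add_zero]
        exact (hprod x).deriv
      · have hdk1 : Differentiable ℂ (iteratedDeriv (k - 1) f) :=
          hf.differentiable_iteratedDeriv (k - 1) (by exact_mod_cast lt_top_iff_ne_top.2 (by simp))
        have := ((hprod x).add (((hdk1 x).hasDerivAt).const_mul (k : ℂ))).deriv
        simpa [Pi.add_def] using this
    rw [hsplit]
    have e1 : deriv (iteratedDeriv k f) = iteratedDeriv (k + 1) f := (iteratedDeriv_succ).symm
    have e2 : (k : ℂ) * deriv (iteratedDeriv (k - 1) f) x = (k : ℂ) * iteratedDeriv k f x := by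
      rcases Nat.eq_zero_or_pos k with hk | hk
      · subst hk; simp
      · have : k - 1 + 1 = k := Nat.succ_pred_eq_of_pos hk
        rw [← iteratedDeriv_succ, this]
    rw [e1, e2]
    simp only [Nat.add_sub_cancel]
    push_cast
    ring

private lemma iter_const_mul (a c : ℂ) (g : ℂ → ℂ) (k : ℕ) :
    (fun g : ℂ → ℂ => fun x => deriv (deriv g) x - (x + a) * g x)^[k] (fun x => c * g x)
      = fun x => c * ((fun g : ℂ → ℂ => fun x => deriv (deriv g) x - (x + a) * g x)^[k] g x) := by
  induction k generalizing g with
  | zero => simp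
  | succ k ih =>
    rw [Function.iterate_succ_apply, Function.iterate_succ_apply]
    have h1 : deriv (fun x => c * g x) = fun x => c * deriv g x := by
      funext x; exact deriv_const_mul_field c
    have hT : (fun x => deriv (deriv fun x => c * g x) x - (x + a) * (c * g x))
        = fun x => c * (deriv (deriv g) x - (x + a) * g x) := by
      funext x
      rw [h1, deriv_const_mul_field c]
      ring
    show (fun g : ℂ → ℂ => fun x => deriv (deriv g) x - (x + a) * g x)^[k]
        (fun x => deriv (deriv fun x => c * g x) x - (x + a) * (c * g x)) = _
    rw [hT]
    exact ih _

theorem stmt_4 (f : ℂ → ℂ) (hf : ContDiff ℂ ⊤ f)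
    (hairy : ∀ x, deriv (deriv f) x = x * f x)
    (a : ℂ) (m n : ℕ) (hnm : n < m) :
    (fun g : ℂ → ℂ => fun x => deriv (deriv g) x - (x + a) * g x)^[m]
      (fun x => iteratedDeriv n f (x + a)) = 0 := by
  induction m generalizing n with
  | zero => omega
  | succ k ih =>
    rw [Function.iterate_succ_apply]
    have hT : (fun g : ℂ → ℂ => fun x => deriv (deriv g) x - (x + a) * g x)
        (fun x => iteratedDeriv n f (x + a))
        = fun x => (n : ℂ) * iteratedDeriv (n - 1) f (x + a) := by
      funext x
      show deriv (deriv fun x => iteratedDeriv n f (x + a)) x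
          - (x + a) * iteratedDeriv n f (x + a) = _
      have hd1 : deriv (fun x => iteratedDeriv n f (x + a))
          = fun x => iteratedDeriv (n + 1) f (x + a) := by
        funext y
        rw [deriv_comp_add_const, ← iteratedDeriv_succ]
      rw [hd1]
      have hd2 : deriv (fun x => iteratedDeriv (n + 1) f (x + a)) x
          = iteratedDeriv (n + 2) f (x + a) := by
        rw [deriv_comp_add_const, ← iteratedDeriv_succ]
      rw [hd2, key_airy f hf hairy n (x + a)]
      ring
    have hT' : (fun x => deriv (deriv fun x => iteratedDeriv n f (x + a)) x
        - (x + a) * (fun x => iteratedDeriv n f (x + a)) x)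
        = fun x => (n : ℂ) * iteratedDeriv (n - 1) f (x + a) := hT
    rw [hT']
    rcases Nat.eq_zero_or_pos n with hn | hn
    · subst hn
      have : (fun x : ℂ => (0 : ℕ) * iteratedDeriv (0 - 1) f (x + a)) = (0 : ℂ → ℂ) := by
        funext x; simp
      rw [this]
      apply Function.iterate_fixed
      funext x
      simp [Pi.zero_def]
    · rw [iter_const_mul]
      rw [ih (n - 1) (by omega)]
      funext x
      simp
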